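/- Let P and Q be probability measures on a measurable space X. Then TV(P,Q) ≤ Ψ(KL(P‖Q)), where Ψ(x) = sqrt(min{x/2, 1 − exp(−x)}). That is, the total variation distance is bounded both by Pinsker's inequality sqrt(KL/2) and by the Bretagnolle–Huber bound sqrt(1 − exp(−KL)). -/

import Mathlib

open MeasureTheory

/-- Total variation distance: `sup_A (P(A) - Q(A))`. -/
noncomputable def tvDist {X : Type*} [MeasurableSpace X] (P Q : Measure X) : ℝ :=
  ⨆ A : Set X, ((P A).toReal - (Q A).toReal)

/-- Kullback–Leibler divergence `∫ log (dP/dQ) dP` (for `P ≪ Q` with integrable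
log-likelihood ratio). -/
noncomputable def klDiv {X : Type*} [MeasurableSpace X] (P Q : Measure X) : ℝ :=
  ∫ x, Real.log ((P.rnDeriv Q x).toReal) ∂P

/-- `Ψ(x) = sqrt(min{x/2, 1 - exp(-x)})`. -/
noncomputable def Psi (x : ℝ) : ℝ :=
  Real.sqrt (min (x / 2) (1 - Real.exp (-x)))

section Aux

noncomputable def Fq (t : ℝ) : ℝ := t * Real.log t - t + 1 - 3*(t-1)^2/(2*(t+2))
noncomputable def F1 (t : ℝ) : ℝ := Real.log t - 3*(t-1)*(t+5)/(2*(t+2)^2)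

lemma hasDerivAt_Fq {t : ℝ} (ht : 0 < t) : HasDerivAt Fq (F1 t) t := by
  have h2 : (2*(t+2)) ≠ 0 := by positivity
  have h1 : HasDerivAt (fun t : ℝ => t * Real.log t) (Real.log t + 1) t :=
    Real.hasDerivAt_mul_log ht.ne'
  have hnum : HasDerivAt (fun t : ℝ => 3*(t-1)^2) (3*(2*(t-1))) t := by
    have : HasDerivAt (fun t : ℝ => (t-1)^2) (2*(t-1)) t := by
      simpa using ((hasDerivAt_id t).sub_const 1).fun_pow 2
    simpa [mul_comm] using this.const_mul 3
  have hden : HasDerivAt (fun t : ℝ => 2*(t+2)) 2 t := by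
    simpa using ((hasDerivAt_id t).add_const 2).const_mul 2
  have hq : HasDerivAt (fun t : ℝ => 3*(t-1)^2/(2*(t+2)))
      ((3*(2*(t-1)) * (2*(t+2)) - 3*(t-1)^2 * 2) / (2*(t+2))^2) t := hnum.div hden h2
  have := (h1.sub (hasDerivAt_id t)).add_const 1 |>.sub hq
  refine this.congr_deriv ?_
  have h3 : (t+2) ≠ 0 := by positivity
  unfold F1
  field_simp
  ring

lemma hasDerivAt_F1 {t : ℝ} (ht : 0 < t) :
    HasDerivAt F1 ((t-1)^2*(t+8)/(t*(t+2)^3)) t := by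
  have h3 : (t+2) ≠ 0 := by positivity
  have h2 : (2*(t+2)^2) ≠ 0 := by positivity
  have hlog : HasDerivAt Real.log t⁻¹ t := Real.hasDerivAt_log ht.ne'
  have hnum : HasDerivAt (fun t : ℝ => 3*(t-1)*(t+5)) (3*(t-1) + 3*(t+5)) t := by
    have ha : HasDerivAt (fun t : ℝ => 3*(t-1)) 3 t := by
      simpa using ((hasDerivAt_id t).sub_const 1).const_mul 3
    have hb : HasDerivAt (fun t : ℝ => t+5) 1 t := (hasDerivAt_id t).add_const 5
    simpa [mul_comm, add_comm] using ha.fun_mul hb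
  have hden : HasDerivAt (fun t : ℝ => 2*(t+2)^2) (2*(2*(t+2))) t := by
    have : HasDerivAt (fun t : ℝ => (t+2)^2) (2*(t+2)) t := by
      simpa using ((hasDerivAt_id t).add_const 2).fun_pow 2
    simpa using this.const_mul 2
  have hq : HasDerivAt (fun t : ℝ => 3*(t-1)*(t+5)/(2*(t+2)^2))
      (((3*(t-1) + 3*(t+5)) * (2*(t+2)^2) - 3*(t-1)*(t+5) * (2*(2*(t+2)))) / (2*(t+2)^2)^2) t :=
    hnum.div hden h2
  have := hlog.sub hq
  refine this.congr_deriv ?_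
  field_simp
  ring

lemma F1_mono : MonotoneOn F1 (Set.Ioi (0:ℝ)) := by
  have hi : interior (Set.Ioi (0:ℝ)) = Set.Ioi 0 := interior_Ioi
  refine monotoneOn_of_deriv_nonneg (convex_Ioi 0)
    (fun x hx => ((hasDerivAt_F1 hx).continuousAt.continuousWithinAt)) ?_ ?_
  · rw [hi]; exact fun x hx => (hasDerivAt_F1 hx).differentiableAt.differentiableWithinAt
  · rw [hi]; intro x hx
    rw [(hasDerivAt_F1 hx).deriv]
    have hx' : (0:ℝ) < x := hx
    positivity

lemma key_ineq {t : ℝ} (ht : 0 ≤ t) : 3*(t-1)^2/(2*(t+2)) ≤ t * Real.log t - t + 1 := by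
  rcases eq_or_lt_of_le ht with h0 | h0
  · simp [← h0]; norm_num
  have hF1one : F1 1 = 0 := by simp [F1]
  have hFone : Fq 1 = 0 := by simp [Fq]
  have hF : 0 ≤ Fq t := by
    rcases le_total t 1 with h1 | h1
    · have hanti : AntitoneOn Fq (Set.Ioc (0:ℝ) 1) := by
        refine antitoneOn_of_deriv_nonpos (convex_Ioc 0 1)
          (fun x hx => ((hasDerivAt_Fq hx.1).continuousAt.continuousWithinAt)) ?_ ?_
        · rw [interior_Ioc]
          exact fun x hx => (hasDerivAt_Fq hx.1).differentiableAt.differentiableWithinAt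
        · rw [interior_Ioc]; intro x hx
          rw [(hasDerivAt_Fq hx.1).deriv]
          have := F1_mono (Set.mem_Ioi.2 hx.1) (Set.mem_Ioi.2 one_pos) hx.2.le
          linarith [hF1one ▸ this]
      have := hanti (Set.mem_Ioc.2 ⟨h0, h1⟩) (Set.mem_Ioc.2 ⟨one_pos, le_refl 1⟩) h1
      linarith [hFone ▸ this]
    · have hmono : MonotoneOn Fq (Set.Ici (1:ℝ)) := by
        refine monotoneOn_of_deriv_nonneg (convex_Ici 1)
          (fun x hx => ((hasDerivAt_Fq (lt_of_lt_of_le one_pos hx)).continuousAt.continuousWithinAt)) ?_ ?_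
        · rw [interior_Ici]
          exact fun x hx => (hasDerivAt_Fq (lt_trans one_pos hx)).differentiableAt.differentiableWithinAt
        · rw [interior_Ici]; intro x hx
          rw [(hasDerivAt_Fq (lt_trans one_pos hx)).deriv]
          have := F1_mono (Set.mem_Ioi.2 one_pos) (Set.mem_Ioi.2 (lt_trans one_pos hx)) hx.le
          linarith [hF1one ▸ this]
      have := hmono (Set.mem_Ici.2 (le_refl 1)) (Set.mem_Ici.2 h1) h1
      linarith [hFone ▸ this]
  unfold Fq at hF; linarith

lemma integral_sq_cauchy_schwarz {α : Type*} [MeasurableSpace α] (μ : Measure α)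
    {f g : α → ℝ} (hf0 : ∀ x, 0 ≤ f x) (hg0 : ∀ x, 0 ≤ g x)
    (hfm : AEStronglyMeasurable f μ) (hgm : AEStronglyMeasurable g μ)
    (hf2 : Integrable (fun x => f x ^ 2) μ) (hg2 : Integrable (fun x => g x ^ 2) μ) :
    (∫ x, f x * g x ∂μ) ^ 2 ≤ (∫ x, f x ^ 2 ∂μ) * (∫ x, g x ^ 2 ∂μ) := by
  have hpq : Real.HolderConjugate 2 2 := Real.HolderConjugate.two_two
  have h2 : (ENNReal.ofReal (2:ℝ)) = 2 := by norm_num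
  have hfL : MemLp f (ENNReal.ofReal (2:ℝ)) μ := by
    rw [h2]; exact (memLp_two_iff_integrable_sq hfm).2 hf2
  have hgL : MemLp g (ENNReal.ofReal (2:ℝ)) μ := by
    rw [h2]; exact (memLp_two_iff_integrable_sq hgm).2 hg2
  have key := MeasureTheory.integral_mul_le_Lp_mul_Lq_of_nonneg hpq
    (Filter.Eventually.of_forall hf0) (Filter.Eventually.of_forall hg0) hfL hgL
  have hrw : ∀ h : α → ℝ, ∫ a, h a ^ (2:ℝ) ∂μ = ∫ a, h a ^ 2 ∂μ := by
    intro h; congr 1; funext a; rw [← Real.rpow_natCast (h a) 2]; norm_num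
  rw [hrw f, hrw g] at key
  have hA : 0 ≤ ∫ x, f x ^ 2 ∂μ := integral_nonneg fun x => sq_nonneg _
  have hB : 0 ≤ ∫ x, g x ^ 2 ∂μ := integral_nonneg fun x => sq_nonneg _
  have hI : 0 ≤ ∫ x, f x * g x ∂μ := integral_nonneg fun x => mul_nonneg (hf0 x) (hg0 x)
  calc (∫ x, f x * g x ∂μ) ^ 2
      ≤ ((∫ x, f x ^ 2 ∂μ) ^ ((1:ℝ)/2) * (∫ x, g x ^ 2 ∂μ) ^ ((1:ℝ)/2)) ^ 2 := by
        apply pow_le_pow_left₀ hI key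
    _ = (∫ x, f x ^ 2 ∂μ) * (∫ x, g x ^ 2 ∂μ) := by
        rw [mul_pow, ← Real.rpow_natCast (_ ^ ((1:ℝ)/2)) 2, ← Real.rpow_natCast (_ ^ ((1:ℝ)/2)) 2,
          ← Real.rpow_mul hA, ← Real.rpow_mul hB]
        norm_num
end Aux

/-- Pinsker and Bretagnolle–Huber: `TV(P,Q) ≤ Ψ(KL(P‖Q))`. -/
theorem tv_le_Psi_klDiv {X : Type*} [MeasurableSpace X] (P Q : Measure X)
    [IsProbabilityMeasure P] [IsProbabilityMeasure Q]
    (hac : P ≪ Q)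
    (hint : Integrable (fun x => Real.log ((P.rnDeriv Q x).toReal)) P) :
    tvDist P Q ≤ Psi (klDiv P Q) := by
  set g : X → ℝ := fun x => (P.rnDeriv Q x).toReal with hg_def
  have hgm : Measurable g := (Measure.measurable_rnDeriv P Q).ennreal_toReal
  have hg0 : ∀ x, 0 ≤ g x := fun x => ENNReal.toReal_nonneg
  have hgint : Integrable g Q := Measure.integrable_toReal_rnDeriv
  have hgone : (∫ x, g x ∂Q) = 1 := by
    rw [hg_def, Measure.integral_toReal_rnDeriv hac]; simp
  set m : X → ℝ := fun x => max (g x - 1) 0 with hm_def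
  have hmint : Integrable m Q := (hgint.sub (integrable_const 1)).pos_part
  set δ : ℝ := ∫ x, m x ∂Q with hδ_def
  have hδ0 : 0 ≤ δ := integral_nonneg fun x => le_max_right _ _
  have hgsub : Integrable (fun x => g x - 1) Q := hgint.sub (integrable_const 1)
  have hgsub0 : (∫ x, (g x - 1) ∂Q) = 0 := by
    rw [integral_sub hgint (integrable_const 1), hgone]; simp
  -- pointwise identities
  have hmin_pt : ∀ x, min (g x) 1 = g x - m x := by
    intro x; rcases le_total (g x) 1 with h | h
    · rw [min_eq_left h, hm_def]; simp only; rw [max_eq_right (by linarith : g x - 1 ≤ 0)]; ring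
    · rw [min_eq_right h, hm_def]; simp only; rw [max_eq_left (by linarith : (0:ℝ) ≤ g x - 1)]; ring
  have hmax_pt : ∀ x, max (g x) 1 = 1 + m x := by
    intro x; rcases le_total (g x) 1 with h | h
    · rw [max_eq_right h, hm_def]; simp only; rw [max_eq_right (by linarith : g x - 1 ≤ 0)]; ring
    · rw [max_eq_left h, hm_def]; simp only; rw [max_eq_left (by linarith : (0:ℝ) ≤ g x - 1)]; ring
  have habs_pt : ∀ x, |g x - 1| = 2 * m x - (g x - 1) := by
    intro x; rcases le_total (g x) 1 with h | h
    · rw [abs_of_nonpos (by linarith : g x - 1 ≤ 0), hm_def]; simp only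
      rw [max_eq_right (by linarith : g x - 1 ≤ 0)]; ring
    · rw [abs_of_nonneg (by linarith : (0:ℝ) ≤ g x - 1), hm_def]; simp only
      rw [max_eq_left (by linarith : (0:ℝ) ≤ g x - 1)]; ring
  -- integrability and integral values
  have hminint : Integrable (fun x => min (g x) 1) Q :=
    (hgint.sub hmint).congr (Filter.Eventually.of_forall fun x => (hmin_pt x).symm)
  have hmaxint : Integrable (fun x => max (g x) 1) Q :=
    ((integrable_const 1).add hmint).congr (Filter.Eventually.of_forall fun x => (hmax_pt x).symm)
  have hmin_eq : (∫ x, min (g x) 1 ∂Q) = 1 - δ := by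
    rw [integral_congr_ae (Filter.Eventually.of_forall hmin_pt), integral_sub hgint hmint, hgone]
  have hmax_eq : (∫ x, max (g x) 1 ∂Q) = 1 + δ := by
    rw [integral_congr_ae (Filter.Eventually.of_forall hmax_pt), integral_add (integrable_const 1) hmint]
    simp [hδ_def]
  have habsint : Integrable (fun x => |g x - 1|) Q := hgsub.abs
  have habs_eq : (∫ x, |g x - 1| ∂Q) = 2 * δ := by
    rw [integral_congr_ae (Filter.Eventually.of_forall habs_pt),
      integral_sub (hmint.const_mul 2) hgsub, integral_const_mul, hgsub0]
    simp [hδ_def]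
  have hδle1 : δ ≤ 1 := by
    have : 0 ≤ (1:ℝ) - δ := hmin_eq ▸ integral_nonneg fun x => le_min (hg0 x) zero_le_one
    linarith
  -- TV ≤ δ
  have htv : tvDist P Q ≤ δ := by
    rw [tvDist]
    apply ciSup_le
    intro A
    set B := toMeasurable Q A with hB_def
    have hPB : (P A).toReal ≤ (P B).toReal :=
      ENNReal.toReal_mono (measure_ne_top P B) (measure_mono (subset_toMeasurable Q A))
    have hQB : (Q B).toReal = (Q A).toReal := by rw [hB_def, measure_toMeasurable]
    have h1 : (P B).toReal - (Q B).toReal ≤ δ := by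
      have e1 : (P B).toReal = ∫ x in B, g x ∂Q := (Measure.setIntegral_toReal_rnDeriv hac B).symm
      have e2 : (Q B).toReal = ∫ x in B, (1:ℝ) ∂Q := by simp [measureReal_def]
      rw [e1, e2, ← integral_sub hgint.integrableOn (integrable_const 1).integrableOn]
      calc (∫ x in B, (g x - 1) ∂Q) ≤ ∫ x in B, m x ∂Q :=
            setIntegral_mono (hgint.sub (integrable_const 1)).integrableOn hmint.integrableOn
              (fun x => le_max_left _ _)
        _ ≤ δ := setIntegral_le_integral hmint (Filter.Eventually.of_forall fun x => le_max_right _ _)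
    linarith
  -- KL as an integral over Q
  have hKL : klDiv P Q = ∫ x, g x * Real.log (g x) ∂Q := by
    rw [klDiv, ← MeasureTheory.integral_rnDeriv_smul hac (f := fun x => Real.log (g x))]
    simp_rw [smul_eq_mul]
    rfl
  have hglogint : Integrable (fun x => g x * Real.log (g x)) Q := by
    have := (MeasureTheory.integrable_rnDeriv_smul_iff hac (f := fun x => Real.log (g x))).2 hint
    simpa [smul_eq_mul] using this
  -- Pinsker: δ^2 ≤ KL/2
  have hPinsker : δ ^ 2 ≤ klDiv P Q / 2 := by
    set φ : X → ℝ := fun x => g x * Real.log (g x) - g x + 1 with hφ_def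
    have hφint : Integrable φ Q := (hglogint.sub hgint).add (integrable_const 1)
    have hφeq : (∫ x, φ x ∂Q) = klDiv P Q := by
      rw [hφ_def]
      simp_rw [sub_add]
      rw [integral_sub hglogint hgsub, hgsub0, hKL]
      simp
    set ψ : X → ℝ := fun x => 3*(g x - 1)^2/(2*(g x + 2)) with hψ_def
    have hψφ : ∀ x, ψ x ≤ φ x := fun x => key_ineq (hg0 x)
    have hψ0 : ∀ x, 0 ≤ ψ x := by
      intro x
      have := hg0 x
      positivity
    have hψm : Measurable ψ := by
      apply Measurable.div
      · exact (measurable_const.mul (((hgm.sub measurable_const).pow measurable_const)))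
      · exact measurable_const.mul (hgm.add measurable_const)
    have hψint : Integrable ψ Q := by
      refine Integrable.mono' hφint hψm.aestronglyMeasurable
        (Filter.Eventually.of_forall fun x => ?_)
      rw [Real.norm_of_nonneg (hψ0 x)]; exact hψφ x
    have hψle : (∫ x, ψ x ∂Q) ≤ klDiv P Q := hφeq ▸ integral_mono hψint hφint hψφ
    -- Cauchy-Schwarz
    set a : X → ℝ := fun x => |g x - 1| / Real.sqrt (g x + 2) with ha_def
    set b : X → ℝ := fun x => Real.sqrt (g x + 2) with hb_def
    have hbpos : ∀ x, 0 < b x := fun x => Real.sqrt_pos.2 (by linarith [hg0 x])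
    have ha0 : ∀ x, 0 ≤ a x := fun x => div_nonneg (abs_nonneg _) (hbpos x).le
    have hab : ∀ x, a x * b x = |g x - 1| := fun x => div_mul_cancel₀ _ (hbpos x).ne'
    have ha2 : ∀ x, a x ^ 2 = (2/3) * ψ x := by
      intro x
      rw [ha_def, hψ_def]; simp only
      rw [div_pow, sq_abs, Real.sq_sqrt (by linarith [hg0 x] : (0:ℝ) ≤ g x + 2)]
      have : g x + 2 ≠ 0 := by linarith [hg0 x]
      field_simp
    have hb2 : ∀ x, b x ^ 2 = g x + 2 := fun x =>
      Real.sq_sqrt (by linarith [hg0 x] : (0:ℝ) ≤ g x + 2)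
    have ham : Measurable a := ((hgm.sub measurable_const).abs).div
      (Real.continuous_sqrt.measurable.comp (hgm.add measurable_const))
    have hbm : Measurable b := Real.continuous_sqrt.measurable.comp (hgm.add measurable_const)
    have ha2int : Integrable (fun x => a x ^ 2) Q :=
      (hψint.const_mul (2/3)).congr (Filter.Eventually.of_forall fun x => (ha2 x).symm)
    have hb2int : Integrable (fun x => b x ^ 2) Q :=
      (hgint.add (integrable_const 2)).congr (Filter.Eventually.of_forall fun x => (hb2 x).symm)
    have hcs := integral_sq_cauchy_schwarz Q ha0 (fun x => (hbpos x).le)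
      ham.aestronglyMeasurable hbm.aestronglyMeasurable ha2int hb2int
    have e1 : (∫ x, a x * b x ∂Q) = 2 * δ := by
      rw [integral_congr_ae (Filter.Eventually.of_forall hab), habs_eq]
    have e2 : (∫ x, a x ^ 2 ∂Q) = (2/3) * ∫ x, ψ x ∂Q := by
      rw [integral_congr_ae (Filter.Eventually.of_forall ha2), integral_const_mul]
    have e3 : (∫ x, b x ^ 2 ∂Q) = 3 := by
      rw [integral_congr_ae (Filter.Eventually.of_forall hb2),
        integral_add hgint (integrable_const 2), hgone]
      simp
      norm_num
    rw [e1, e2, e3] at hcs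
    nlinarith [hψle]
  -- Bretagnolle–Huber: δ^2 ≤ 1 - exp(-KL)
  have hBH : δ ^ 2 ≤ 1 - Real.exp (-(klDiv P Q)) := by
    set f : X → ℝ := fun x => -(1/2) * Real.log (g x) with hf_def
    have hfint : Integrable f P := hint.const_mul _
    have hsq_pt : ∀ x, g x * Real.exp (f x) = Real.sqrt (g x) := by
      intro x
      rcases eq_or_lt_of_le (hg0 x) with h | h
      · rw [← h]; simp
      · have e1 : Real.sqrt (g x) = Real.exp (Real.log (g x) * (1/2)) := by
          rw [Real.sqrt_eq_rpow, Real.rpow_def_of_pos h]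
        rw [e1, hf_def]; simp only
        rw [← Real.exp_log h, ← Real.exp_add]
        · congr 1
          rw [Real.exp_log h]
          ring
    have hsqrtint : Integrable (fun x => Real.sqrt (g x)) Q := by
      have hgp1 : Integrable (fun x => g x + 1) Q := hgint.add (integrable_const 1)
      refine Integrable.mono' hgp1
        ((Real.continuous_sqrt.measurable.comp hgm).aestronglyMeasurable)
        (Filter.Eventually.of_forall fun x => ?_)
      rw [Real.norm_of_nonneg (Real.sqrt_nonneg _)]
      nlinarith [Real.sq_sqrt (hg0 x), Real.sqrt_nonneg (g x), hg0 x]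
    have hexpint : Integrable (fun x => Real.exp (f x)) P := by
      rw [← MeasureTheory.integrable_rnDeriv_smul_iff hac]
      simp_rw [smul_eq_mul]
      exact hsqrtint.congr (Filter.Eventually.of_forall fun x => (hsq_pt x).symm)
    have hjensen := ConvexOn.map_average_le convexOn_exp Real.continuous_exp.continuousOn
      isClosed_univ (μ := P) (Filter.Eventually.of_forall fun x => Set.mem_univ (f x))
      hfint hexpint
    rw [average_eq_integral, average_eq_integral] at hjensen
    have hintf : (∫ x, f x ∂P) = -(1/2) * klDiv P Q := by
      rw [hf_def, klDiv]; exact integral_const_mul _ _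
    have hexp_eq : (∫ x, Real.exp (f x) ∂P) = ∫ x, Real.sqrt (g x) ∂Q := by
      rw [← MeasureTheory.integral_rnDeriv_smul hac (f := fun x => Real.exp (f x))]
      simp_rw [smul_eq_mul]
      exact integral_congr_ae (Filter.Eventually.of_forall hsq_pt)
    rw [hintf, hexp_eq] at hjensen
    -- Cauchy–Schwarz on sqrt(min)·sqrt(max)
    have hsplit : ∀ x, Real.sqrt (g x) = Real.sqrt (min (g x) 1) * Real.sqrt (max (g x) 1) := by
      intro x
      rw [← Real.sqrt_mul (le_min (hg0 x) zero_le_one), min_mul_max, mul_one]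
    have hminm : Measurable fun x => Real.sqrt (min (g x) 1) :=
      Real.continuous_sqrt.measurable.comp (hgm.min measurable_const)
    have hmaxm : Measurable fun x => Real.sqrt (max (g x) 1) :=
      Real.continuous_sqrt.measurable.comp (hgm.max measurable_const)
    have hmin2 : Integrable (fun x => Real.sqrt (min (g x) 1) ^ 2) Q :=
      hminint.congr (Filter.Eventually.of_forall fun x =>
        (Real.sq_sqrt (le_min (hg0 x) zero_le_one)).symm)
    have hmax2 : Integrable (fun x => Real.sqrt (max (g x) 1) ^ 2) Q :=
      hmaxint.congr (Filter.Eventually.of_forall fun x =>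
        (Real.sq_sqrt (le_trans zero_le_one (le_max_right _ _))).symm)
    have hcs := integral_sq_cauchy_schwarz Q (fun x => Real.sqrt_nonneg _)
      (fun x => Real.sqrt_nonneg _) hminm.aestronglyMeasurable hmaxm.aestronglyMeasurable
      hmin2 hmax2
    have e1 : (∫ x, Real.sqrt (min (g x) 1) * Real.sqrt (max (g x) 1) ∂Q)
        = ∫ x, Real.sqrt (g x) ∂Q :=
      integral_congr_ae (Filter.Eventually.of_forall fun x => (hsplit x).symm)
    have e2 : (∫ x, Real.sqrt (min (g x) 1) ^ 2 ∂Q) = 1 - δ := by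
      rw [integral_congr_ae (Filter.Eventually.of_forall fun x =>
        Real.sq_sqrt (le_min (hg0 x) zero_le_one)), hmin_eq]
    have e3 : (∫ x, Real.sqrt (max (g x) 1) ^ 2 ∂Q) = 1 + δ := by
      rw [integral_congr_ae (Filter.Eventually.of_forall fun x =>
        Real.sq_sqrt (le_trans zero_le_one (le_max_right _ _))), hmax_eq]
    rw [e1, e2, e3] at hcs
    have hsq_nonneg : 0 ≤ ∫ x, Real.sqrt (g x) ∂Q := integral_nonneg fun x => Real.sqrt_nonneg _
    have hexpsq : Real.exp (-(1/2) * klDiv P Q) ^ 2 = Real.exp (-(klDiv P Q)) := by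
      rw [sq, ← Real.exp_add]; congr 1; ring
    have h4 : Real.exp (-(klDiv P Q)) ≤ (1 - δ) * (1 + δ) := by
      calc Real.exp (-(klDiv P Q)) = Real.exp (-(1/2) * klDiv P Q) ^ 2 := hexpsq.symm
        _ ≤ (∫ x, Real.sqrt (g x) ∂Q) ^ 2 := pow_le_pow_left₀ (Real.exp_nonneg _) hjensen 2
        _ ≤ (1 - δ) * (1 + δ) := hcs
    nlinarith
  -- conclude
  have hfin : δ ≤ Psi (klDiv P Q) := by
    rw [Psi, ← Real.sqrt_sq hδ0]
    exact Real.sqrt_le_sqrt (le_min hPinsker hBH)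
  linarith [htv]
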